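/- Let q = p^α be a prime power and L a proper subset of {0,...,q-1}. Then there exists a univariate polynomial F_L(x) ∈ ℚ[x] of degree at most q-1 such that: (1) F_L(t) ∈ ℤ for each t ∈ ℤ; (2) F_L(m) ≡ 1 (mod p) for every integer m with m mod q ∉ L; and (3) F_L(s) ≡ 0 (mod p) for every integer s with s mod q ∈ L. -/

import Mathlib

open Polynomial Finset

/-- Interpolation coefficients in the binomial basis. -/
private def cf (v : ℕ → ℤ) : ℕ → ℤ
  | a => v a - ∑ k ∈ (Finset.range a).attach, cf v k.1 * (a.choose k.1)
  decreasing_by exact Finset.mem_range.mp k.2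

private lemma cf_spec (v : ℕ → ℤ) (a : ℕ) :
    ∑ k ∈ Finset.range (a + 1), cf v k * (a.choose k : ℤ) = v a := by
  rw [Finset.sum_range_succ, Nat.choose_self]
  rw [cf, ← Finset.sum_attach (Finset.range a) (fun k => cf v k * (a.choose k : ℤ))]
  push_cast
  ring

private lemma cf_interp (v : ℕ → ℤ) {a Q : ℕ} (ha : a < Q) :
    ∑ k ∈ Finset.range Q, cf v k * (a.choose k : ℤ) = v a := by
  rw [← cf_spec v a]
  refine (Finset.sum_subset (Finset.range_subset_range.mpr ha) ?_).symm
  intro k _ hk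
  have : a < k := by simpa using hk
  rw [Nat.choose_eq_zero_of_lt this]
  simp

private lemma eval_B (k : ℕ) (t : ℤ) :
    (((k.factorial : ℚ)⁻¹) • descPochhammer ℚ k).eval (t : ℚ) = ((Ring.choose t k : ℤ) : ℚ) := by
  rw [Polynomial.eval_smul, smul_eq_mul,
    ← descPochhammer_map (Int.castRingHom ℚ) k, Polynomial.eval_intCast_map]
  have h2 : (descPochhammer ℤ k).eval t = k.factorial • Ring.choose t k := by
    rw [Polynomial.eval_eq_smeval, Ring.descPochhammer_eq_factorial_smul_choose]
  simp only [Int.cast_id] at h2 ⊢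
  rw [h2, nsmul_eq_mul, map_mul, map_natCast, ← mul_assoc,
    inv_mul_cancel₀ (by exact_mod_cast k.factorial_ne_zero), one_mul]
  simp

private lemma choose_period {p : ℕ} (hp : p.Prime) {α : ℕ} {k : ℕ} (hk : k < p ^ α) (t : ℤ) :
    (p : ℤ) ∣ Ring.choose (t + ((p ^ α : ℕ) : ℤ)) k - Ring.choose t k := by
  rw [Ring.add_choose_eq k (Commute.all _ _),
    ← Finset.sum_erase_add _ _ (show ((k, 0) : ℕ × ℕ) ∈ Finset.HasAntidiagonal.antidiagonal k by simp),
    Ring.choose_zero_right, mul_one, add_sub_cancel_right]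
  refine Finset.dvd_sum ?_
  intro ij hij
  obtain ⟨hne, hmem⟩ := Finset.mem_erase.mp hij
  have hsum : ij.1 + ij.2 = k := Finset.HasAntidiagonal.mem_antidiagonal.mp hmem
  have h2 : ij.2 ≠ 0 := by
    rintro h0
    exact hne (Prod.ext (by omega) h0)
  have hcast : Ring.choose (((p ^ α : ℕ)) : ℤ) ij.2 = ((p ^ α).choose ij.2 : ℤ) :=
    Ring.choose_natCast _ _
  have hd : p ∣ (p ^ α).choose ij.2 := Nat.Prime.dvd_choose_pow hp h2 (by omega)
  rw [hcast]
  exact Dvd.dvd.mul_left (by exact_mod_cast hd) _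

theorem stmt5 (p α : ℕ) (hp : p.Prime) (hα : 1 ≤ α) (q : ℕ) (hq : q = p ^ α)
    (L : Finset ℕ) (hL : L ⊂ Finset.range q) :
    ∃ F : Polynomial ℚ, F.natDegree ≤ q - 1 ∧
      (∀ t : ℤ, ∃ z : ℤ, F.eval (t : ℚ) = z) ∧
      (∀ m : ℤ, (m % (q : ℤ)).toNat ∉ L → ∀ z : ℤ, F.eval (m : ℚ) = z → z ≡ 1 [ZMOD p]) ∧
      (∀ s : ℤ, (s % (q : ℤ)).toNat ∈ L → ∀ z : ℤ, F.eval (s : ℚ) = z → z ≡ 0 [ZMOD p]) := by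
  have hq0 : 0 < q := by
    rw [hq]; exact Nat.pow_pos hp.pos
  set v : ℕ → ℤ := fun a => if a ∈ L then 0 else 1 with hv
  set c : ℕ → ℤ := cf v with hc
  set W : ℤ → ℤ := fun t => ∑ k ∈ Finset.range q, c k * Ring.choose t k with hW
  set F : Polynomial ℚ :=
    ∑ k ∈ Finset.range q, (c k : ℚ) • (((k.factorial : ℚ)⁻¹) • descPochhammer ℚ k) with hF
  have hevalF : ∀ t : ℤ, F.eval (t : ℚ) = (W t : ℚ) := by
    intro t
    rw [hF, Polynomial.eval_finset_sum, hW]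
    push_cast
    refine Finset.sum_congr rfl fun k _ => ?_
    rw [Polynomial.eval_smul, eval_B, smul_eq_mul]
  have hWper : ∀ t : ℤ, (p : ℤ) ∣ W (t + q) - W t := by
    intro t
    have heq : W (t + q) - W t
        = ∑ k ∈ Finset.range q, c k * (Ring.choose (t + q) k - Ring.choose t k) := by
      rw [hW, ← Finset.sum_sub_distrib]
      exact Finset.sum_congr rfl fun k _ => by ring
    rw [heq]
    refine Finset.dvd_sum fun k hk => Dvd.dvd.mul_left ?_ _
    have hk' : k < p ^ α := by rw [← hq]; exact Finset.mem_range.mp hk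
    have := choose_period hp hk' t
    rwa [← hq] at this
  have hWmul : ∀ (n : ℤ) (t : ℤ), (p : ℤ) ∣ W (t + q * n) - W t := by
    intro n
    induction n using Int.induction_on with
    | zero => simp
    | succ n ih =>
      intro t
      have h1 := hWper (t + q * n)
      have h2 := ih t
      have e : t + (q : ℤ) * (n + 1) = (t + q * n) + q := by ring
      rw [e]
      have := dvd_add h1 h2
      rwa [sub_add_sub_cancel] at this
    | pred n ih =>
      intro t
      have h1 := hWper (t + q * (-n - 1))
      have h2 := ih t
      have e : (t + (q : ℤ) * (-n - 1)) + q = t + q * (-n) := by ring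
      rw [e] at h1
      have e2 : W (t + (q : ℤ) * (-n - 1)) - W t
          = (W (t + q * (-n)) - W t) - (W (t + q * (-n)) - W (t + q * (-n - 1))) := by ring
      rw [e2]
      exact dvd_sub h2 h1
  have hWmod : ∀ m : ℤ, (p : ℤ) ∣ W m - W (m % q) := by
    intro m
    have := hWmul (m / q) (m % q)
    rwa [Int.emod_add_mul_ediv m q] at this
  have hWnat : ∀ a : ℕ, a < q → W (a : ℤ) = v a := by
    intro a ha
    have hcn : ∀ k, Ring.choose ((a : ℕ) : ℤ) k = (a.choose k : ℤ) :=
      fun k => Ring.choose_natCast a k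
    rw [hW]
    simp only [hcn]
    exact cf_interp v ha
  have key : ∀ m : ℤ, ∀ z : ℤ, F.eval (m : ℚ) = z →
      (p : ℤ) ∣ z - v ((m % (q : ℤ)).toNat) := by
    intro m z hz
    have hzW : z = W m := by
      have := (hevalF m).symm.trans hz
      exact_mod_cast this.symm
    have hnn : 0 ≤ m % (q : ℤ) := Int.emod_nonneg m (by exact_mod_cast hq0.ne')
    have hlt : m % (q : ℤ) < q := Int.emod_lt_of_pos m (by exact_mod_cast hq0)
    set a : ℕ := (m % (q : ℤ)).toNat with haa
    have ha1 : ((a : ℕ) : ℤ) = m % q := Int.toNat_of_nonneg hnn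
    have ha2 : a < q := by omega
    have hWa : W (m % (q : ℤ)) = v a := by rw [← ha1]; exact hWnat a ha2
    have := hWmod m
    rw [hWa] at this
    rwa [hzW]
  refine ⟨F, ?_, ?_, ?_, ?_⟩
  · refine Polynomial.natDegree_sum_le_of_forall_le _ _ fun k hk => ?_
    refine le_trans (Polynomial.natDegree_smul_le _ _)
      (le_trans (Polynomial.natDegree_smul_le _ _) ?_)
    rw [descPochhammer_natDegree]
    have := Finset.mem_range.mp hk
    omega
  · exact fun t => ⟨W t, hevalF t⟩
  · intro m hm z hz
    have := key m z hz
    rw [hv] at this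
    simp only [hm, if_neg hm] at this
    exact (Int.modEq_iff_dvd.mpr (by simpa using this)).symm
  · intro s hs z hz
    have := key s z hz
    rw [hv] at this
    simp only [if_pos hs] at this
    exact (Int.modEq_iff_dvd.mpr (by simpa using this)).symm
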